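/- arXiv:2501.17390 — 2 statements merged into one kernel-verified Lean document; each statement's English description precedes it below -/
import Mathlib

section
/- For α > 0 and all t ∈ ℝ, the derivative of E_α satisfies (d/dt) E_α(t) = (1/α) E_{α,α}(t). -/
open Real MeasureTheory Set

/-- Two-parameter Mittag-Leffler function `E_{α,β}(t) = Σ t^k / Γ(α k + β)`. -/
noncomputable def mittagLeffler (α β t : ℝ) : ℝ := ∑' k : ℕ, t ^ k / Real.Gamma (α * k + β)

/-- One-parameter Mittag-Leffler function `E_α = E_{α,1}`. -/
noncomputable def ML (α t : ℝ) : ℝ := mittagLeffler α 1 t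

/-- The Riemann-Liouville integral `I^{1-α}(x - x 0)` appearing in the Caputo derivative. -/
noncomputable def caputoKernel (α : ℝ) (x : ℝ → ℝ) (s : ℝ) : ℝ :=
  (1 / Real.Gamma (1 - α)) * ∫ r in (0:ℝ)..s, (s - r) ^ (-α) * (x r - x 0)

/-- Caputo fractional derivative of order `α`. -/
noncomputable def caputo (α : ℝ) (x : ℝ → ℝ) (t : ℝ) : ℝ := deriv (caputoKernel α x) t

lemma ML_aux_summable (α : ℝ) (hα : 0 < α) (R : ℝ) (hR : 1 ≤ R) :
    Summable (fun k : ℕ => ((k : ℝ) + 1) * R ^ k / Real.Gamma (α * k + 1)) := by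
  set m : ℕ := ⌈1 / α⌉₊ with hm
  have hm1 : 1 ≤ m := Nat.one_le_ceil_iff.2 (by positivity)
  have hαm : 1 ≤ α * m := by
    have h := Nat.le_ceil (1 / α)
    calc (1:ℝ) = α * (1/α) := by field_simp
    _ ≤ α * m := mul_le_mul_of_nonneg_left h hα.le
  set b : ℝ := 2 * R with hb
  have hb1 : 1 < b := by nlinarith
  have hb0 : 0 < b := lt_trans one_pos hb1
  obtain ⟨C₀, hC₀⟩ := (FloorSemiring.tendsto_pow_div_factorial_atTop (b ^ m)).bddAbove_range
  set C : ℝ := max C₀ 1 with hC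
  have hC1 : 1 ≤ C := le_max_right _ _
  have hC0 : 0 < C := lt_of_lt_of_le one_pos hC1
  have hBq : ∀ q : ℕ, (b ^ m) ^ q ≤ C * q.factorial := by
    intro q
    have h1 : (b ^ m) ^ q / q.factorial ≤ C₀ := hC₀ ⟨q, rfl⟩
    have h2 : (0:ℝ) < q.factorial := by positivity
    calc (b ^ m) ^ q = ((b ^ m) ^ q / q.factorial) * q.factorial := by field_simp
    _ ≤ C₀ * q.factorial := by nlinarith
    _ ≤ C * q.factorial := by nlinarith [le_max_left C₀ 1]
  have key : ∀ n : ℕ, m ≤ n → b ^ n / (C * b ^ m) ≤ Real.Gamma (α * n + 1) := by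
    intro n hn
    have hαn : 1 ≤ α * n := le_trans hαm
      (mul_le_mul_of_nonneg_left (Nat.cast_le.2 hn) hα.le)
    have hfl1 : 1 ≤ ⌊α * n⌋₊ := Nat.le_floor (by exact_mod_cast hαn)
    have hdiv : n / m ≤ ⌊α * n⌋₊ := by
      apply Nat.le_floor
      have h1 : ((n / m : ℕ) : ℝ) ≤ (n : ℝ) / m := Nat.cast_div_le
      have h2 : (n : ℝ) / m ≤ α * n := by
        rw [div_le_iff₀ (by exact_mod_cast hm1)]
        calc (n:ℝ) = 1 * n := (one_mul _).symm
        _ ≤ (α * m) * n := mul_le_mul_of_nonneg_right hαm (Nat.cast_nonneg n)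
        _ = α * n * m := by ring
      linarith
    have step1 : ((⌊α * n⌋₊ : ℕ).factorial : ℝ) ≤ Real.Gamma (α * n + 1) := by
      rw [← Real.Gamma_nat_eq_factorial]
      apply Real.Gamma_strictMonoOn_Ici.monotoneOn
      · simp only [mem_Ici]
        have : (1:ℝ) ≤ (⌊α * n⌋₊ : ℝ) := by exact_mod_cast hfl1
        push_cast; linarith
      · simp only [mem_Ici]; linarith
      · have := Nat.floor_le (le_trans zero_le_one hαn)
        push_cast; linarith
    have step2 : ((n / m : ℕ).factorial : ℝ) ≤ ((⌊α * n⌋₊ : ℕ).factorial : ℝ) := by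
      exact_mod_cast Nat.factorial_le hdiv
    have step3 : b ^ n ≤ (b ^ m) ^ (n / m) * b ^ m := by
      rw [← pow_mul, ← pow_add]
      apply pow_le_pow_right₀ hb1.le
      have := Nat.div_add_mod n m
      have := Nat.mod_lt n (by omega : 0 < m)
      omega
    have step4 : (b ^ m) ^ (n / m) ≤ C * ((n / m : ℕ).factorial : ℝ) := hBq _
    rw [div_le_iff₀ (by positivity)]
    calc b ^ n ≤ (b ^ m) ^ (n / m) * b ^ m := step3
    _ ≤ C * ((n / m : ℕ).factorial : ℝ) * b ^ m :=
          mul_le_mul_of_nonneg_right step4 (by positivity)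
    _ ≤ C * Real.Gamma (α * n + 1) * b ^ m :=
          mul_le_mul_of_nonneg_right
            (mul_le_mul_of_nonneg_left (step2.trans step1) hC0.le) (by positivity)
    _ = Real.Gamma (α * n + 1) * (C * b ^ m) := by ring
  -- comparator
  have hhalf : ‖(1/2 : ℝ)‖ < 1 := by rw [norm_div]; simp; norm_num
  have hsum1 : Summable (fun n : ℕ => ((n : ℝ) + 1) * (1/2 : ℝ) ^ n) := by
    have h1 := summable_pow_mul_geometric_of_norm_lt_one (R := ℝ) 1 hhalf
    have h2 := summable_geometric_of_lt_one (by norm_num : (0:ℝ) ≤ 1/2) (by norm_num)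
    simpa [add_mul, pow_one] using h1.add h2
  have hsum2 : Summable (fun n : ℕ => C * b ^ m * (((n : ℝ) + 1) * (1/2 : ℝ) ^ n)) :=
    hsum1.mul_left _
  rw [← summable_nat_add_iff m]
  apply Summable.of_nonneg_of_le
    (f := fun n : ℕ => C * b ^ m * ((((n + m : ℕ) : ℝ) + 1) * (1/2 : ℝ) ^ (n + m)))
  · intro n
    have := Real.Gamma_pos_of_pos (show (0:ℝ) < α * (n + m : ℕ) + 1 by positivity)
    positivity
  · intro n
    have hΓ := key (n + m) (by omega)
    have hΓpos : 0 < Real.Gamma (α * (n + m : ℕ) + 1) :=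
      Real.Gamma_pos_of_pos (by positivity)
    have hnum : (0:ℝ) ≤ (((n + m : ℕ) : ℝ) + 1) * R ^ (n + m) := by positivity
    calc (((n + m : ℕ) : ℝ) + 1) * R ^ (n + m) / Real.Gamma (α * (n + m : ℕ) + 1)
        ≤ (((n + m : ℕ) : ℝ) + 1) * R ^ (n + m) / (b ^ (n + m) / (C * b ^ m)) :=
          div_le_div_of_nonneg_left hnum (by positivity) hΓ
    _ = C * b ^ m * ((((n + m : ℕ) : ℝ) + 1) * (R / b) ^ (n + m)) := by
          field_simp; rw [← mul_pow]; have := hb0.ne'; congr 1; field_simp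
    _ = C * b ^ m * ((((n + m : ℕ) : ℝ) + 1) * (1/2 : ℝ) ^ (n + m)) := by
          rw [hb]; congr 2; congr 1; field_simp
  · exact (summable_nat_add_iff m).2 hsum2

/-- The derivative of `E_α` is `(1/α) E_{α,α}`. -/
theorem deriv_mittagLeffler (α : ℝ) (hα : 0 < α) (t : ℝ) :
    HasDerivAt (ML α) ((1 / α) * mittagLeffler α α t) t := by
  set R : ℝ := |t| + 1 with hRdef
  have hR : 1 ≤ R := by have := abs_nonneg t; simp only [hRdef]; linarith
  have hu := ML_aux_summable α hα R hR
  have hΓpos : ∀ k : ℕ, 0 < Real.Gamma (α * k + 1) := fun k =>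
    Real.Gamma_pos_of_pos (by positivity)
  set g' : ℕ → ℝ → ℝ := fun k x => (k : ℝ) * x ^ (k - 1) / Real.Gamma (α * k + 1) with hg'def
  have hbound : ∀ (k : ℕ) (x : ℝ), x ∈ Metric.ball (0:ℝ) R →
      ‖g' k x‖ ≤ ((k : ℝ) + 1) * R ^ k / Real.Gamma (α * k + 1) := by
    intro k x hx
    have hxR : |x| ≤ R := by
      have := Metric.mem_ball.1 hx
      rw [Real.dist_eq, sub_zero] at this
      exact this.le
    have habs : ‖g' k x‖ = (k : ℝ) * |x| ^ (k - 1) / Real.Gamma (α * k + 1) := by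
      rw [hg'def]
      simp only [Real.norm_eq_abs, abs_div, abs_mul, abs_pow, Nat.abs_cast,
        abs_of_pos (hΓpos k)]
    rw [habs]
    have hnum : (k : ℝ) * |x| ^ (k - 1) ≤ ((k : ℝ) + 1) * R ^ k := by
      have h1 : |x| ^ (k - 1) ≤ R ^ (k - 1) := pow_le_pow_left₀ (abs_nonneg x) hxR _
      have h2 : R ^ (k - 1) ≤ R ^ k := pow_le_pow_right₀ hR (Nat.sub_le k 1)
      have h3 : (0:ℝ) ≤ R ^ k := by positivity
      nlinarith [Nat.cast_nonneg (α := ℝ) k, pow_nonneg (abs_nonneg x) (k-1)]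
    exact div_le_div_of_nonneg_right hnum (hΓpos k).le |>.trans_eq rfl
  have htmem : t ∈ Metric.ball (0:ℝ) R := by
    rw [Metric.mem_ball, Real.dist_eq, sub_zero]
    simp only [hRdef]; linarith
  have hg0 : Summable (fun k : ℕ => t ^ k / Real.Gamma (α * k + 1)) := by
    apply Summable.of_norm_bounded hu
    intro k
    rw [Real.norm_eq_abs, abs_div, abs_pow, abs_of_pos (hΓpos k)]
    apply div_le_div_of_nonneg_right _ (hΓpos k).le
    have h1 : |t| ^ k ≤ R ^ k := pow_le_pow_left₀ (abs_nonneg t) (by simp [hRdef]) _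
    nlinarith [pow_nonneg (abs_nonneg t) k, pow_nonneg (le_trans zero_le_one hR) k,
      Nat.cast_nonneg (α := ℝ) k]
  have key : HasDerivAt (fun x : ℝ => ∑' k : ℕ, x ^ k / Real.Gamma (α * k + 1))
      (∑' k : ℕ, g' k t) t :=
    hasDerivAt_tsum_of_isPreconnected hu Metric.isOpen_ball
      (convex_ball (0:ℝ) R).isPreconnected
      (fun k x _ => (hasDerivAt_pow k x).div_const _) hbound htmem hg0 htmem
  have hs' : Summable (fun k : ℕ => g' k t) :=
    Summable.of_norm_bounded hu (fun k => hbound k t htmem)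
  have heq : (∑' k : ℕ, g' k t) = (1 / α) * mittagLeffler α α t := by
    rw [Summable.tsum_eq_zero_add hs']
    simp only [hg'def, Nat.cast_zero, zero_mul, zero_div, zero_add]
    rw [mittagLeffler, ← tsum_mul_left]
    apply tsum_congr
    intro j
    have h1 : α * (j : ℝ) + α ≠ 0 := by positivity
    have h3 : Real.Gamma (α * j + α) ≠ 0 := (Real.Gamma_pos_of_pos (by positivity)).ne'
    have h2 : Real.Gamma (α * ((j : ℝ) + 1) + 1) = (α * j + α) * Real.Gamma (α * j + α) := by
      rw [show α * ((j : ℝ) + 1) + 1 = (α * j + α) + 1 by ring, Real.Gamma_add_one h1]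
    push_cast [Nat.add_sub_cancel, h2]
    have h4 : ((j : ℝ) + 1) ≠ 0 := by positivity
    field_simp
  have hML : ML α = fun x : ℝ => ∑' k : ℕ, x ^ k / Real.Gamma (α * k + 1) := by
    funext x; rfl
  rw [hML, ← heq]
  exact key
end

section
/- For any square matrix A ∈ ℝ^{k×k}, Δ_k Γ(A) = A Δ_k, where Γ(A) = [[diag(A) + (A − diag(A))⁺, (A − diag(A))⁻], [(A − diag(A))⁻, diag(A) + (A − diag(A))⁺]] is the min-Metzler representation of A and Δ_k = [I_k, −I_k]. Moreover, Γ(A) is a Metzler matrix (all off-diagonal entries are nonnegative). -/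
open Real MeasureTheory Set

/-- The block matrix `Δ_k = [I_k, -I_k]`. -/
noncomputable def Delta (k : ℕ) : Matrix (Fin k) (Fin k ⊕ Fin k) ℝ :=
  Matrix.fromCols 1 (-1)

/-- Min-positive representation `π(x) = (x⁺; x⁻)` of a vector. -/
noncomputable def piRep {k : ℕ} (x : Fin k → ℝ) : Fin k ⊕ Fin k → ℝ :=
  Sum.elim (fun i => max (x i) 0) (fun i => max (-x i) 0)

/-- Componentwise positive part of a matrix. -/
noncomputable def posM {m l : Type*} (M : Matrix m l ℝ) : Matrix m l ℝ :=
  fun i j => max (M i j) 0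

/-- Componentwise negative part of a matrix. -/
noncomputable def negM {m l : Type*} (M : Matrix m l ℝ) : Matrix m l ℝ :=
  fun i j => max (-(M i j)) 0

/-- Min-positive representation `Π(M)` of a matrix. -/
noncomputable def PiM {k l : ℕ} (M : Matrix (Fin k) (Fin l) ℝ) :
    Matrix (Fin k ⊕ Fin k) (Fin l ⊕ Fin l) ℝ :=
  Matrix.fromBlocks (posM M) (negM M) (negM M) (posM M)

/-- Min-Metzler representation `Γ(A)` of a square matrix. -/
noncomputable def GammaM {k : ℕ} (A : Matrix (Fin k) (Fin k) ℝ) :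
    Matrix (Fin k ⊕ Fin k) (Fin k ⊕ Fin k) ℝ :=
  Matrix.fromBlocks
    (Matrix.diagonal (fun i => A i i) + posM (A - Matrix.diagonal (fun i => A i i)))
    (negM (A - Matrix.diagonal (fun i => A i i)))
    (negM (A - Matrix.diagonal (fun i => A i i)))
    (Matrix.diagonal (fun i => A i i) + posM (A - Matrix.diagonal (fun i => A i i)))

/-- `Δ_k Γ(A) = A Δ_k`, and `Γ(A)` is a Metzler matrix. -/
theorem delta_GammaM (k : ℕ) (A : Matrix (Fin k) (Fin k) ℝ) :
    Delta k * GammaM A = A * Delta k ∧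
    ∀ i j, i ≠ j → 0 ≤ GammaM A i j := by
  constructor
  · have hBC : ∀ B C : Matrix (Fin k) (Fin k) ℝ,
        B = Matrix.diagonal (fun i => A i i) + posM (A - Matrix.diagonal (fun i => A i i)) →
        C = negM (A - Matrix.diagonal (fun i => A i i)) → B - C = A := by
      intro B C hB hC
      subst hB hC
      ext i j
      simp only [Matrix.sub_apply, Matrix.add_apply, posM, negM]
      rcases le_total (A i j - Matrix.diagonal (fun i => A i i) i j) 0 with h | h
      · rw [max_eq_right h, max_eq_left (by linarith)]
        simp
      · rw [max_eq_left h, max_eq_right (by linarith)]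
        simp
    unfold Delta GammaM
    rw [Matrix.fromCols_mul_fromBlocks, Matrix.mul_fromCols]
    have := hBC _ _ rfl rfl
    rw [Matrix.one_mul, Matrix.neg_mul, Matrix.one_mul, Matrix.mul_one, ← sub_eq_add_neg, this]
    ext i j
    rcases j with j | j
    · simp [Matrix.fromCols]
    · have h2 := congrFun (congrFun this i) j
      simp only [Matrix.sub_apply, Matrix.add_apply] at h2
      simp only [Matrix.fromCols, Matrix.of_apply, Sum.elim_inr, Matrix.add_apply,
        Matrix.neg_apply, neg_one_mul, mul_neg_one]
      linarith
  · rintro (i | i) (j | j) hij <;>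
      simp only [GammaM, Matrix.fromBlocks_apply₁₁, Matrix.fromBlocks_apply₁₂,
        Matrix.fromBlocks_apply₂₁, Matrix.fromBlocks_apply₂₂, Matrix.add_apply,
        posM, negM, Matrix.diagonal_apply] <;>
      first
      | (rw [if_neg (by simpa using hij)]; simpa using le_max_right _ 0)
      | exact le_max_right _ 0
end
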